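/- Suppose the generalized share algorithm is run with shared update p_{j,t} = (1-α)v_{j,t} + α w_{j,t}/Z_t where Z_t = Σ_i w_{i,t}, α ∈ (0,1), and weights satisfying v_{j,t} ≤ w_{j,t} ≤ 1 and C w_{j,t+1} ≥ w_{j,t} for some C ≥ 1. Then for all T ≥ 1, losses ℓ_t ∈ [0,1]^d, and sequences u_1,…,u_T ∈ ℝ_+^d: Σ_t ‖u_t‖_1 p_t·ℓ_t - Σ_t u_t·ℓ_t ≤ (n(u_1^T) ln d)/η + (n(u_1^T) T ln C)/η + (η/8)Σ_t ‖u_t‖_1 + (m(u_1^T)/η) ln(max_t Z_t / α) + ((Σ_{t=2}^T ‖u_t‖_1 - m(u_1^T))/η) ln(1/(1-α)), where n(u_1^T) = Σ_i max_t u_{i,t} and m(u_1^T) = Σ_{t=2}^T D_TV(u_t,u_{t-1}). -/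

import Mathlib

open Real Finset

lemma sum_shift (F : ℕ → ℝ) (a b : ℕ) :
    ∑ t ∈ Finset.Icc a b, F (t + 1) = ∑ t ∈ Finset.Icc (a + 1) (b + 1), F t := by
  rw [← Finset.map_add_right_Icc, Finset.sum_map]
  rfl

lemma sum_telescope_Icc (f : ℕ → ℝ) (a b : ℕ) (h : a ≤ b + 1) :
    ∑ t ∈ Finset.Icc a b, (f (t + 1) - f t) = f (b + 1) - f a := by
  induction b with
  | zero =>
    interval_cases a
    · simp
    · simp
  | succ n ih =>
    rcases le_or_gt a (n + 1) with h' | h'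
    · rw [Finset.sum_Icc_succ_top h', ih h']
      ring
    · have ha : a = n + 2 := by omega
      subst ha
      rw [Finset.Icc_eq_empty (by omega)]
      simp

lemma sum_Icc_bot (f : ℕ → ℝ) {a b : ℕ} (h : a ≤ b) :
    ∑ t ∈ Finset.Icc a b, f t = f a + ∑ t ∈ Finset.Icc (a + 1) b, f t := by
  rw [Finset.Icc_add_one_left_eq_Ioc, ← Finset.Icc_erase_left,
    Finset.add_sum_erase _ f (Finset.mem_Icc.mpr ⟨le_rfl, h⟩)]

lemma hoeff_scalar (μ : ℝ) (h0 : 0 ≤ μ) (h1 : μ ≤ 1) (x : ℝ) (hx : 0 ≤ x) :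
    Real.log (1 - μ + μ * Real.exp (-x)) ≤ -(x * μ) + x ^ 2 / 8 := by
  set D : ℝ → ℝ := fun y => 1 - μ + μ * Real.exp (-y) with hDdef
  have hD : ∀ y, 0 < D y := by
    intro y
    rcases eq_or_lt_of_le h0 with h | h
    · simp [hDdef, ← h]
    · have := Real.exp_pos (-y)
      have : 0 < μ * Real.exp (-y) := by positivity
      simp only [hDdef]; linarith
  have hDd : ∀ y, HasDerivAt D (-(μ * Real.exp (-y))) y := by
    intro y
    have h1 : HasDerivAt (fun y : ℝ => Real.exp (-y)) (-Real.exp (-y)) y := by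
      simpa using (hasDerivAt_neg y).exp
    have := (h1.const_mul μ).const_add (1 - μ)
    rw [show -(μ * Real.exp (-y)) = μ * -Real.exp (-y) by ring]; exact this
  set g : ℝ → ℝ := fun y => -(μ * Real.exp (-y)) / D y + μ - y / 4 with hgdef
  have hgd : ∀ y, HasDerivAt g
      ((μ * Real.exp (-y) * D y - -(μ * Real.exp (-y)) * -(μ * Real.exp (-y))) / (D y) ^ 2 - 1 / 4) y := by
    intro y
    have hn : HasDerivAt (fun y : ℝ => -(μ * Real.exp (-y))) (μ * Real.exp (-y)) y := by
      have h1 : HasDerivAt (fun y : ℝ => Real.exp (-y)) (-Real.exp (-y)) y := by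
        simpa using (hasDerivAt_neg y).exp
      have := (h1.const_mul μ).neg
      rw [show μ * Real.exp (-y) = -(μ * -Real.exp (-y)) by ring]; exact this
    have hq := hn.div (hDd y) (ne_of_gt (hD y))
    have := (hq.add_const μ).sub ((hasDerivAt_id y).div_const 4)
    exact this
  have hg0 : g 0 = 0 := by simp [hgdef, hDdef]
  have hganti : AntitoneOn g (Set.Ici 0) := by
    apply antitoneOn_of_deriv_nonpos (convex_Ici 0)
    · exact fun y _ => (hgd y).continuousAt.continuousWithinAt
    · exact fun y _ => (hgd y).differentiableAt.differentiableWithinAt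
    · intro y _
      rw [(hgd y).deriv]
      have hDy := hD y
      have he : 0 ≤ μ * Real.exp (-y) := by positivity
      rw [sub_nonpos, div_le_iff₀ (by positivity)]
      simp only [hDdef]
      nlinarith [sq_nonneg (1 - μ + μ * Real.exp (-y) - 2 * (μ * Real.exp (-y))), Real.exp_pos (-y)]
  have hgle : ∀ y, 0 ≤ y → g y ≤ 0 := by
    intro y hy
    have := hganti (Set.mem_Ici.2 le_rfl) (Set.mem_Ici.2 hy) hy
    simpa [hg0] using this
  set f : ℝ → ℝ := fun y => Real.log (D y) + μ * y - y ^ 2 / 8 with hfdef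
  have hfd : ∀ y, HasDerivAt f (g y) y := by
    intro y
    have hlog := (hDd y).log (ne_of_gt (hD y))
    have h2 : HasDerivAt (fun x : ℝ => μ * x) (μ * 1) y := (hasDerivAt_id y).const_mul μ
    have h3 : HasDerivAt (fun x : ℝ => x ^ 2 / 8) ((2 : ℕ) * y ^ (2 - 1) / 8) y :=
      (hasDerivAt_pow 2 y).div_const 8
    have H := (hlog.add h2).sub h3
    have H' : HasDerivAt f (-(μ * Real.exp (-y)) / D y + μ * 1 - ((2 : ℕ) : ℝ) * y ^ (2 - 1) / 8) y := H
    convert H' using 1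
    show -(μ * Real.exp (-y)) / D y + μ - y / 4 = _
    push_cast
    ring
  have hfanti : AntitoneOn f (Set.Ici 0) := by
    apply antitoneOn_of_deriv_nonpos (convex_Ici 0)
    · exact fun y _ => (hfd y).continuousAt.continuousWithinAt
    · exact fun y _ => (hfd y).differentiableAt.differentiableWithinAt
    · intro y hy
      rw [(hfd y).deriv]
      exact hgle y (le_of_lt (by simpa using hy))
  have := hfanti (Set.mem_Ici.2 le_rfl) (Set.mem_Ici.2 hx) hx
  have hf0 : f 0 = 0 := by simp [hfdef, hDdef]
  rw [hf0] at this
  simp only [hfdef] at this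
  linarith

lemma hoeff_sum (d : ℕ) (hd : 1 ≤ d) (η : ℝ) (hη : 0 < η) (p ℓ : Fin d → ℝ)
    (hp : ∀ i, 0 < p i) (hps : ∑ i, p i = 1) (hℓ : ∀ i, ℓ i ∈ Set.Icc (0:ℝ) 1) :
    Real.log (∑ i, p i * Real.exp (-η * ℓ i)) ≤ -(η * ∑ i, p i * ℓ i) + η ^ 2 / 8 := by
  haveI : NeZero d := ⟨by omega⟩
  set μ := ∑ i, p i * ℓ i with hμ
  have hμ0 : 0 ≤ μ := Finset.sum_nonneg fun i _ => mul_nonneg (hp i).le (hℓ i).1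
  have hμ1 : μ ≤ 1 := by
    calc μ ≤ ∑ i, p i := Finset.sum_le_sum fun i _ => by
              nlinarith [(hℓ i).2, (hp i).le]
    _ = 1 := hps
  have hpt : ∀ i, Real.exp (-η * ℓ i) ≤ (1 - ℓ i) + ℓ i * Real.exp (-η) := by
    intro i
    have h := convexOn_exp.2 (Set.mem_univ (0 : ℝ)) (Set.mem_univ (-η))
      (by linarith [(hℓ i).2] : (0:ℝ) ≤ 1 - ℓ i) (hℓ i).1 (by ring)
    simpa [smul_eq_mul, Real.exp_zero, mul_comm] using h
  have hsum_le : ∑ i, p i * Real.exp (-η * ℓ i) ≤ 1 - μ + μ * Real.exp (-η) := by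
    calc ∑ i, p i * Real.exp (-η * ℓ i)
        ≤ ∑ i, p i * ((1 - ℓ i) + ℓ i * Real.exp (-η)) :=
          Finset.sum_le_sum fun i _ => mul_le_mul_of_nonneg_left (hpt i) (hp i).le
      _ = (∑ i, p i) - (∑ i, p i * ℓ i) + (∑ i, p i * ℓ i) * Real.exp (-η) := by
          rw [Finset.sum_mul, ← Finset.sum_sub_distrib, ← Finset.sum_add_distrib]
          exact Finset.sum_congr rfl fun i _ => by ring
      _ = 1 - μ + μ * Real.exp (-η) := by rw [hps]
  have hpos : 0 < ∑ i, p i * Real.exp (-η * ℓ i) :=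
    Finset.sum_pos (fun i _ => mul_pos (hp i) (Real.exp_pos _)) Finset.univ_nonempty
  calc Real.log (∑ i, p i * Real.exp (-η * ℓ i))
      ≤ Real.log (1 - μ + μ * Real.exp (-η)) := Real.log_le_log hpos hsum_le
    _ ≤ -(η * μ) + η ^ 2 / 8 := hoeff_scalar μ hμ0 hμ1 η hη.le


/-- `D_TV(x,y) = Σ_{i : x_i ≥ y_i} (x_i - y_i)`. -/
noncomputable def dtv {d : ℕ} (x y : Fin d → ℝ) : ℝ :=
  ∑ i ∈ Finset.univ.filter (fun i => y i ≤ x i), (x i - y i)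

set_option maxHeartbeats 1000000

/-- Theorem 3 of the paper (sparse target sequences): regret bound for the
generalized share algorithm with the shared update
`p_{j,t} = (1-α) v_{j,t} + α w_{j,t}/Z_t` under the conditions
`v_{j,t} ≤ w_{j,t} ≤ 1` and `C w_{j,t+1} ≥ w_{j,t}`. -/
theorem stmt14 (d T : ℕ) (hd : 1 ≤ d) (hT : 1 ≤ T) (η α C : ℝ) (hη : 0 < η)
    (hα : α ∈ Set.Ioo (0 : ℝ) 1) (hC : 1 ≤ C)
    (ℓ p v w : ℕ → Fin d → ℝ) (u : ℕ → Fin d → ℝ)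
    (Z : ℕ → ℝ) (hZ : ∀ t, Z t = ∑ i, w t i)
    (hℓ : ∀ t ∈ Finset.Icc 1 T, ∀ j, ℓ t j ∈ Set.Icc (0 : ℝ) 1)
    (hp1 : ∀ j, p 1 j = 1 / d) (hv1 : ∀ j, v 1 j = 1 / d)
    (hv : ∀ t ∈ Finset.Icc 1 T, ∀ j,
      v (t + 1) j = p t j * Real.exp (-η * ℓ t j) / ∑ i, p t i * Real.exp (-η * ℓ t i))
    (hshare : ∀ t ∈ Finset.Icc 2 T, ∀ j,
      p t j = (1 - α) * v t j + α * w t j / Z t)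
    (hw : ∀ t ∈ Finset.Icc 1 T, ∀ j, v t j ≤ w t j ∧ w t j ≤ 1)
    (hwC : ∀ t ∈ Finset.Icc 1 T, ∀ j, w t j ≤ C * w (t + 1) j)
    (hu : ∀ t ∈ Finset.Icc 1 T, ∀ i, 0 ≤ u t i) :
    ∑ t ∈ Finset.Icc 1 T, (∑ i, u t i) * (∑ i, p t i * ℓ t i)
        - ∑ t ∈ Finset.Icc 1 T, ∑ i, u t i * ℓ t i
      ≤ (∑ i, (Finset.Icc 1 T).sup' (Finset.nonempty_Icc.2 hT) (fun t => u t i))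
            * Real.log d / η
        + (∑ i, (Finset.Icc 1 T).sup' (Finset.nonempty_Icc.2 hT) (fun t => u t i))
            * T * Real.log C / η
        + (η / 8) * ∑ t ∈ Finset.Icc 1 T, ∑ i, u t i
        + (∑ t ∈ Finset.Icc 2 T, dtv (u t) (u (t - 1))) / η
            * Real.log ((Finset.Icc 1 T).sup' (Finset.nonempty_Icc.2 hT) Z / α)
        + (∑ t ∈ Finset.Icc 2 T, ∑ i, u t i
            - ∑ t ∈ Finset.Icc 2 T, dtv (u t) (u (t - 1))) / η
          * Real.log (1 / (1 - α)) := by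
  obtain ⟨hα0, hα1⟩ := hα
  have h1α : (0:ℝ) < 1 - α := by linarith
  have hd0 : (0:ℝ) < d := by exact_mod_cast Nat.lt_of_lt_of_le Nat.zero_lt_one hd
  have hC0 : (0:ℝ) < C := by linarith
  haveI : NeZero d := ⟨by omega⟩
  have hlogC0 : 0 ≤ Real.log C := Real.log_nonneg hC
  have hlogd0 : 0 ≤ Real.log d := Real.log_nonneg (by exact_mod_cast hd)
  have mem1T : ∀ {t : ℕ}, 1 ≤ t → t ≤ T → t ∈ Finset.Icc 1 T :=
    fun h1 h2 => Finset.mem_Icc.mpr ⟨h1, h2⟩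
  set M : Fin d → ℝ := fun i => (Finset.Icc 1 T).sup' (Finset.nonempty_Icc.2 hT) (fun t => u t i)
    with hMdef
  set Zmax : ℝ := (Finset.Icc 1 T).sup' (Finset.nonempty_Icc.2 hT) Z with hZmaxdef
  have huM : ∀ t, 1 ≤ t → t ≤ T → ∀ i, u t i ≤ M i :=
    fun t h1 h2 i => Finset.le_sup' (fun t => u t i) (mem1T h1 h2)
  have hM0 : ∀ i, 0 ≤ M i := fun i => le_trans (hu 1 (mem1T le_rfl hT) i) (huM 1 le_rfl hT i)
  -- positivity of p
  have hppos : ∀ t, 1 ≤ t → t ≤ T → ∀ j, 0 < p t j := by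
    intro t ht1
    induction t, ht1 using Nat.le_induction with
    | base => intro _ j; rw [hp1]; positivity
    | succ t ht ih =>
      intro hT' j
      have htT : t ≤ T := by omega
      have hpt := ih htT
      have hden : 0 < ∑ i, p t i * Real.exp (-η * ℓ t i) :=
        Finset.sum_pos (fun i _ => mul_pos (hpt i) (Real.exp_pos _)) Finset.univ_nonempty
      have hvpos : ∀ j, 0 < v (t+1) j := by
        intro j
        rw [hv t (mem1T ht htT) j]
        exact div_pos (mul_pos (hpt j) (Real.exp_pos _)) hden
      have hwpos : ∀ j, 0 < w (t+1) j :=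
        fun j => lt_of_lt_of_le (hvpos j) ((hw (t+1) (mem1T (by omega) hT') j).1)
      have hZp : 0 < Z (t+1) := by
        rw [hZ]; exact Finset.sum_pos (fun i _ => hwpos i) Finset.univ_nonempty
      rw [hshare (t+1) (Finset.mem_Icc.mpr ⟨by omega, hT'⟩) j]
      have h1 : 0 < (1-α) * v (t+1) j := mul_pos h1α (hvpos j)
      have h2 : 0 < α * w (t+1) j / Z (t+1) := div_pos (mul_pos hα0 (hwpos j)) hZp
      linarith
  have hvpos : ∀ t, 1 ≤ t → t ≤ T → ∀ j, 0 < v t j := by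
    intro t ht1 htT j
    rcases eq_or_lt_of_le ht1 with h | h
    · rw [← h, hv1]; positivity
    · obtain ⟨s, rfl⟩ : ∃ s, t = s + 1 := ⟨t - 1, by omega⟩
      have hs1 : 1 ≤ s := by omega
      have hsT : s ≤ T := by omega
      rw [hv s (mem1T hs1 hsT) j]
      have hden : 0 < ∑ i, p s i * Real.exp (-η * ℓ s i) :=
        Finset.sum_pos (fun i _ => mul_pos (hppos s hs1 hsT i) (Real.exp_pos _))
          Finset.univ_nonempty
      exact div_pos (mul_pos (hppos s hs1 hsT j) (Real.exp_pos _)) hden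
  have hwpos : ∀ t, 1 ≤ t → t ≤ T → ∀ j, 0 < w t j :=
    fun t h1 h2 j => lt_of_lt_of_le (hvpos t h1 h2 j) ((hw t (mem1T h1 h2) j).1)
  have hZpos : ∀ t, 1 ≤ t → t ≤ T → 0 < Z t := by
    intro t h1 h2
    rw [hZ]; exact Finset.sum_pos (fun i _ => hwpos t h1 h2 i) Finset.univ_nonempty
  have hZmaxpos : 0 < Zmax :=
    lt_of_lt_of_le (hZpos 1 le_rfl hT) (Finset.le_sup' Z (mem1T le_rfl hT))
  have hZle : ∀ t, 1 ≤ t → t ≤ T → Z t ≤ Zmax :=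
    fun t h1 h2 => Finset.le_sup' Z (mem1T h1 h2)
  -- sums of p are 1
  have hvsum : ∀ t, 1 ≤ t → t ≤ T → (∑ i, v (t+1) i) = 1 := by
    intro t h1 h2
    have hden : 0 < ∑ i, p t i * Real.exp (-η * ℓ t i) :=
      Finset.sum_pos (fun i _ => mul_pos (hppos t h1 h2 i) (Real.exp_pos _))
        Finset.univ_nonempty
    rw [Finset.sum_congr rfl (fun i _ => hv t (mem1T h1 h2) i), ← Finset.sum_div,
      div_self (ne_of_gt hden)]
  have hpsum : ∀ t, 1 ≤ t → t ≤ T → (∑ i, p t i) = 1 := by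
    intro t h1 h2
    rcases eq_or_lt_of_le h1 with h | h
    · rw [Finset.sum_congr rfl (fun i _ => by rw [← h, hp1])]
      rw [Finset.sum_const, Finset.card_univ, Fintype.card_fin, nsmul_eq_mul]
      field_simp
    · obtain ⟨s, rfl⟩ : ∃ s, t = s + 1 := ⟨t - 1, by omega⟩
      have hs1 : 1 ≤ s := by omega
      rw [Finset.sum_congr rfl (fun i _ => hshare (s+1) (Finset.mem_Icc.mpr ⟨by omega, h2⟩) i)]
      rw [Finset.sum_add_distrib, ← Finset.mul_sum, hvsum s hs1 (by omega)]
      have : ∑ i, α * w (s+1) i / Z (s+1) = α * (∑ i, w (s+1) i) / Z (s+1) := by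
        rw [← Finset.sum_div, ← Finset.mul_sum]
      rw [this, ← hZ, mul_div_assoc, div_self (ne_of_gt (hZpos (s+1) (by omega) h2))]
      ring
  -- per-step inequality
  have hstep : ∀ t, 1 ≤ t → t ≤ T → ∀ j,
      η * (∑ i, p t i * ℓ t i) - η * ℓ t j
        ≤ Real.log (v (t+1) j) - Real.log (p t j) + η ^ 2 / 8 := by
    intro t h1 h2 j
    have hS : 0 < ∑ i, p t i * Real.exp (-η * ℓ t i) :=
      Finset.sum_pos (fun i _ => mul_pos (hppos t h1 h2 i) (Real.exp_pos _))
        Finset.univ_nonempty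
    have hlogv : Real.log (v (t+1) j)
        = Real.log (p t j) + (-η * ℓ t j)
          - Real.log (∑ i, p t i * Real.exp (-η * ℓ t i)) := by
      rw [hv t (mem1T h1 h2) j,
        Real.log_div (ne_of_gt (mul_pos (hppos t h1 h2 j) (Real.exp_pos _))) (ne_of_gt hS),
        Real.log_mul (ne_of_gt (hppos t h1 h2 j)) (ne_of_gt (Real.exp_pos _)), Real.log_exp]
    have hhoef := hoeff_sum d hd η hη (p t) (ℓ t) (hppos t h1 h2) (hpsum t h1 h2)
      (fun i => hℓ t (mem1T h1 h2) i)
    rw [hlogv]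
    linarith
  -- multiply by u t j, sum over j
  have hstep2 : ∀ t, 1 ≤ t → t ≤ T →
      η * ((∑ i, u t i) * (∑ i, p t i * ℓ t i) - ∑ i, u t i * ℓ t i)
        ≤ (∑ j, u t j * (Real.log (v (t+1) j) - Real.log (p t j)))
          + η ^ 2 / 8 * ∑ i, u t i := by
    intro t h1 h2
    have hsum := Finset.sum_le_sum
      (fun j (_ : j ∈ Finset.univ) => mul_le_mul_of_nonneg_left (hstep t h1 h2 j)
        (hu t (mem1T h1 h2) j))
    have e1 : ∑ j, u t j * (η * (∑ i, p t i * ℓ t i) - η * ℓ t j)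
        = η * ((∑ i, u t i) * (∑ i, p t i * ℓ t i) - ∑ i, u t i * ℓ t i) := by
      rw [Finset.sum_congr rfl (fun j (_ : j ∈ Finset.univ) =>
        show u t j * (η * (∑ i, p t i * ℓ t i) - η * ℓ t j)
          = (η * (∑ i, p t i * ℓ t i)) * u t j - η * (u t j * ℓ t j) from by ring)]
      rw [Finset.sum_sub_distrib, ← Finset.mul_sum, ← Finset.mul_sum]
      ring
    have e2 : ∑ j, u t j * (Real.log (v (t+1) j) - Real.log (p t j) + η ^ 2 / 8)
        = (∑ j, u t j * (Real.log (v (t+1) j) - Real.log (p t j)))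
          + η ^ 2 / 8 * ∑ i, u t i := by
      rw [Finset.sum_congr rfl (fun j (_ : j ∈ Finset.univ) =>
        show u t j * (Real.log (v (t+1) j) - Real.log (p t j) + η ^ 2 / 8)
          = u t j * (Real.log (v (t+1) j) - Real.log (p t j)) + η ^ 2 / 8 * u t j from by ring)]
      rw [Finset.sum_add_distrib, ← Finset.mul_sum]
    rw [← e1, ← e2]
    exact hsum
  -- telescoping decomposition
  set F : ℕ → ℝ := fun s => ∑ j, u (s-1) j * Real.log (v s j) with hFdef
  set H : ℕ → ℝ := fun t => ∑ j, u t j * Real.log (p t j) with hHdef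
  have split1 : ∑ t ∈ Finset.Icc 1 T, ∑ j, u t j * (Real.log (v (t+1) j) - Real.log (p t j))
      = (∑ t ∈ Finset.Icc 2 T, (F t - H t)) + F (T+1) - H 1 := by
    have e0 : ∀ t, (∑ j, u t j * (Real.log (v (t+1) j) - Real.log (p t j)))
        = F (t+1) - H t := by
      intro t
      simp only [hFdef, hHdef, Nat.add_sub_cancel]
      rw [← Finset.sum_sub_distrib]
      exact Finset.sum_congr rfl fun j _ => by ring
    rw [Finset.sum_congr rfl (fun t _ => e0 t), Finset.sum_sub_distrib]
    rw [sum_shift F 1 T, Finset.sum_Icc_succ_top (by omega : 2 ≤ T + 1) F]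
    rw [sum_Icc_bot H hT, Finset.sum_sub_distrib]
    ring
  -- the last pre-weight term is nonpositive
  have hlast : F (T+1) ≤ 0 := by
    have hSd : 0 < ∑ i, p T i * Real.exp (-η * ℓ T i) :=
      Finset.sum_pos (fun i _ => mul_pos (hppos T hT le_rfl i) (Real.exp_pos _))
        Finset.univ_nonempty
    simp only [hFdef, Nat.add_sub_cancel]
    apply Finset.sum_nonpos
    intro j _
    apply mul_nonpos_of_nonneg_of_nonpos (hu T (mem1T hT le_rfl) j)
    have hvp : 0 < v (T+1) j := by
      rw [hv T (mem1T hT le_rfl) j]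
      exact div_pos (mul_pos (hppos T hT le_rfl j) (Real.exp_pos _)) hSd
    apply Real.log_nonpos hvp.le
    rw [hv T (mem1T hT le_rfl) j, div_le_one hSd]
    exact Finset.single_le_sum (f := fun i => p T i * Real.exp (-η * ℓ T i))
      (fun i (_ : i ∈ Finset.univ) =>
        le_of_lt (mul_pos (hppos T hT le_rfl i) (Real.exp_pos _)))
      (Finset.mem_univ j)
  have hfirst : H 1 = -((∑ j, u 1 j) * Real.log d) := by
    simp only [hHdef]
    rw [Finset.sum_congr rfl (fun j (_ : j ∈ Finset.univ) => by
      rw [hp1 j, one_div, Real.log_inv] :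
      ∀ j ∈ Finset.univ, u 1 j * Real.log (p 1 j) = u 1 j * -Real.log d)]
    rw [← Finset.sum_mul]
    ring
  -- per-round bound for the middle terms
  have hdtv_eq : ∀ t : ℕ, dtv (u t) (u (t-1))
      = ∑ j, (if u (t-1) j ≤ u t j then u t j - u (t-1) j else 0) := by
    intro t
    rw [dtv, Finset.sum_filter]
  have hmid : ∀ t, 2 ≤ t → t ≤ T →
      F t - H t ≤ ((∑ j, u t j) - dtv (u t) (u (t-1))) * Real.log (1/(1-α))
        + dtv (u t) (u (t-1)) * Real.log (Zmax / α)
        + ∑ j, (u (t-1) j - u t j) * Real.log (w t j) := by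
    intro t ht2 htT
    have ht1 : 1 ≤ t := by omega
    have htm1 : 1 ≤ t - 1 := by omega
    have htmT : t - 1 ≤ T := by omega
    have claim : ∀ j, u (t-1) j * Real.log (v t j) - u t j * Real.log (p t j)
        ≤ (u t j - (if u (t-1) j ≤ u t j then u t j - u (t-1) j else 0)) * Real.log (1/(1-α))
          + (if u (t-1) j ≤ u t j then u t j - u (t-1) j else 0) * Real.log (Zmax / α)
          + (u (t-1) j - u t j) * Real.log (w t j) := by
      intro j
      have hvp : 0 < v t j := hvpos t ht1 htT j
      have hwp : 0 < w t j := hwpos t ht1 htT j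
      have hpp : 0 < p t j := hppos t ht1 htT j
      have hZp : 0 < Z t := hZpos t ht1 htT
      have hsh := hshare t (Finset.mem_Icc.mpr ⟨ht2, htT⟩) j
      have hwZ : 0 ≤ α * w t j / Z t := le_of_lt (div_pos (mul_pos hα0 hwp) hZp)
      have hp_low1 : Real.log (1-α) + Real.log (v t j) ≤ Real.log (p t j) := by
        rw [← Real.log_mul (ne_of_gt h1α) (ne_of_gt hvp)]
        apply Real.log_le_log (mul_pos h1α hvp)
        rw [hsh]; linarith
      have hp_low2 : Real.log α + Real.log (w t j) - Real.log (Z t) ≤ Real.log (p t j) := by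
        have hpos : 0 < α * w t j / Z t := div_pos (mul_pos hα0 hwp) hZp
        have hle : α * w t j / Z t ≤ p t j := by
          rw [hsh]
          nlinarith [mul_pos h1α hvp]
        have := Real.log_le_log hpos hle
        rw [Real.log_div (ne_of_gt (mul_pos hα0 hwp)) (ne_of_gt hZp),
          Real.log_mul (ne_of_gt hα0) (ne_of_gt hwp)] at this
        linarith
      have hlogZ : Real.log (Z t) - Real.log α ≤ Real.log (Zmax / α) := by
        rw [← Real.log_div (ne_of_gt hZp) (ne_of_gt hα0)]
        apply Real.log_le_log (div_pos hZp hα0)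
        exact (div_le_div_iff_of_pos_right hα0).mpr (hZle t ht1 htT)
      have hlog1α : Real.log (1/(1-α)) = -Real.log (1-α) := by
        rw [one_div, Real.log_inv]
      have hvw : Real.log (v t j) ≤ Real.log (w t j) :=
        Real.log_le_log hvp ((hw t (mem1T ht1 htT) j).1)
      have hum1 : 0 ≤ u (t-1) j := hu (t-1) (mem1T htm1 htmT) j
      have hut : 0 ≤ u t j := hu t (mem1T ht1 htT) j
      by_cases hcase : u (t-1) j ≤ u t j
      · rw [if_pos hcase]
        have c1 : u (t-1) j * (Real.log (v t j) - Real.log (p t j))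
            ≤ u (t-1) j * Real.log (1/(1-α)) :=
          mul_le_mul_of_nonneg_left (by rw [hlog1α]; linarith) hum1
        have c2 : (u t j - u (t-1) j) * (-Real.log (p t j))
            ≤ (u t j - u (t-1) j) * (Real.log (Zmax/α) - Real.log (w t j)) :=
          mul_le_mul_of_nonneg_left (by linarith) (by linarith)
        linarith [c1, c2]
      · rw [if_neg hcase]
        have c1 : u t j * (Real.log (v t j) - Real.log (p t j))
            ≤ u t j * Real.log (1/(1-α)) :=
          mul_le_mul_of_nonneg_left (by rw [hlog1α]; linarith) hut
        have c2 : (u (t-1) j - u t j) * Real.log (v t j)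
            ≤ (u (t-1) j - u t j) * Real.log (w t j) :=
          mul_le_mul_of_nonneg_left hvw (by linarith)
        linarith [c1, c2]
    have eFH : F t - H t = ∑ j, (u (t-1) j * Real.log (v t j) - u t j * Real.log (p t j)) := by
      simp only [hFdef, hHdef]
      rw [Finset.sum_sub_distrib]
    rw [eFH]
    calc ∑ j, (u (t-1) j * Real.log (v t j) - u t j * Real.log (p t j))
        ≤ ∑ j, ((u t j - (if u (t-1) j ≤ u t j then u t j - u (t-1) j else 0)) * Real.log (1/(1-α))
            + (if u (t-1) j ≤ u t j then u t j - u (t-1) j else 0) * Real.log (Zmax / α)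
            + (u (t-1) j - u t j) * Real.log (w t j)) :=
          Finset.sum_le_sum (fun j _ => claim j)
      _ = ((∑ j, u t j) - dtv (u t) (u (t-1))) * Real.log (1/(1-α))
            + dtv (u t) (u (t-1)) * Real.log (Zmax / α)
            + ∑ j, (u (t-1) j - u t j) * Real.log (w t j) := by
          rw [Finset.sum_add_distrib, Finset.sum_add_distrib, ← Finset.sum_mul, ← Finset.sum_mul,
            Finset.sum_sub_distrib, hdtv_eq t]
  -- bound on the weight-ratio sums, per coordinate
  have hB : ∀ j : Fin d, (∑ t ∈ Finset.Icc 2 T, (u (t-1) j - u t j) * Real.log (w t j))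
      ≤ (M j - u 1 j) * Real.log d + M j * T * Real.log C := by
    intro j
    have hu1M : u 1 j ≤ M j := huM 1 le_rfl hT j
    by_cases hT2 : 2 ≤ T
    swap
    · rw [Finset.Icc_eq_empty (by omega), Finset.sum_empty]
      have h1 : 0 ≤ (M j - u 1 j) * Real.log d :=
        mul_nonneg (by linarith) hlogd0
      have h2 : 0 ≤ M j * T * Real.log C :=
        mul_nonneg (mul_nonneg (hM0 j) (Nat.cast_nonneg T)) hlogC0
      linarith
    · set h : ℕ → ℝ := fun t => Real.log (w t j) with hhdef
      have e1 : ∑ t ∈ Finset.Icc 2 T, (u (t-1) j - u t j) * h t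
          = (∑ t ∈ Finset.Icc 2 T, u (t-1) j * h t) - ∑ t ∈ Finset.Icc 2 T, u t j * h t := by
        rw [← Finset.sum_sub_distrib]
        exact Finset.sum_congr rfl fun t _ => by ring
      have e2 : ∑ t ∈ Finset.Icc 2 T, u (t-1) j * h t
          = ∑ t ∈ Finset.Icc 1 (T-1), u t j * h (t+1) := by
        have hs := sum_shift (fun t => u (t-1) j * h t) 1 (T-1)
        rw [show T - 1 + 1 = T from by omega] at hs
        rw [← hs]
        exact Finset.sum_congr rfl fun t _ => by rw [Nat.add_sub_cancel]
      have e3 : ∑ t ∈ Finset.Icc 1 (T-1), u t j * h (t+1)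
          = u 1 j * h 2 + ∑ t ∈ Finset.Icc 2 (T-1), u t j * h (t+1) :=
        sum_Icc_bot _ (by omega)
      have e4 : ∑ t ∈ Finset.Icc 2 T, u t j * h t
          = (∑ t ∈ Finset.Icc 2 (T-1), u t j * h t) + u T j * h T := by
        conv_lhs => rw [show T = T - 1 + 1 from by omega]
        rw [Finset.sum_Icc_succ_top (by omega), show T - 1 + 1 = T from by omega]
      have hmidt : ∀ t ∈ Finset.Icc 2 (T-1),
          u t j * h (t+1) - u t j * h t ≤ M j * (h (t+1) - h t) + M j * Real.log C := by
        intro t ht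
        obtain ⟨ht2, htT1⟩ := Finset.mem_Icc.mp ht
        have ht1T : t ≤ T := by omega
        have hwt : 0 < w t j := hwpos t (by omega) ht1T j
        have hwt1 : 0 < w (t+1) j := hwpos (t+1) (by omega) (by omega) j
        have hCb : h t - h (t+1) ≤ Real.log C := by
          have hle : w t j ≤ C * w (t+1) j := hwC t (mem1T (by omega) ht1T) j
          have hl := Real.log_le_log hwt hle
          rw [Real.log_mul (ne_of_gt hC0) (ne_of_gt hwt1)] at hl
          simp only [hhdef]
          linarith
        have hMu : 0 ≤ M j - u t j := by linarith [huM t (by omega) ht1T j]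
        have hx : 0 ≤ (M j - u t j) * (h (t+1) - h t + Real.log C) :=
          mul_nonneg hMu (by linarith)
        have hy : 0 ≤ u t j * Real.log C :=
          mul_nonneg (hu t (mem1T (by omega) ht1T) j) hlogC0
        nlinarith [hx, hy]
      have e5 : (∑ t ∈ Finset.Icc 2 (T-1), u t j * h (t+1))
            - ∑ t ∈ Finset.Icc 2 (T-1), u t j * h t
          ≤ M j * (h T - h 2) + ((T:ℝ) - 2) * (M j * Real.log C) := by
        rw [← Finset.sum_sub_distrib]
        calc ∑ t ∈ Finset.Icc 2 (T-1), (u t j * h (t+1) - u t j * h t)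
            ≤ ∑ t ∈ Finset.Icc 2 (T-1), (M j * (h (t+1) - h t) + M j * Real.log C) :=
              Finset.sum_le_sum hmidt
          _ = M j * (h T - h 2) + ((T:ℝ) - 2) * (M j * Real.log C) := by
              rw [Finset.sum_add_distrib, ← Finset.mul_sum,
                sum_telescope_Icc h 2 (T-1) (by omega),
                show T - 1 + 1 = T from by omega, Finset.sum_const, Nat.card_Icc,
                nsmul_eq_mul, show T - 1 + 1 - 2 = T - 2 from by omega,
                Nat.cast_sub hT2]
              norm_num
      have hh2 : -(Real.log d + Real.log C) ≤ h 2 := by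
        have hw1 : (1:ℝ)/d ≤ w 1 j := by
          rw [← hv1 j]; exact (hw 1 (mem1T le_rfl hT) j).1
        have hle : (1:ℝ)/d ≤ C * w 2 j := le_trans hw1 (hwC 1 (mem1T le_rfl hT) j)
        have hw2 : 0 < w 2 j := hwpos 2 (by omega) hT2 j
        have h1 : 1/((d:ℝ) * C) ≤ w 2 j := by
          rw [div_le_iff₀ (by positivity)]
          rw [div_le_iff₀ hd0] at hle
          linarith [hle]
        have hl := Real.log_le_log (by positivity) h1
        rw [one_div, Real.log_inv, Real.log_mul (ne_of_gt hd0) (ne_of_gt hC0)] at hl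
        simp only [hhdef]
        linarith
      have hhT : h T ≤ 0 :=
        Real.log_nonpos (hwpos T hT le_rfl j).le ((hw T (mem1T hT le_rfl) j).2)
      have huT : u T j ≤ M j := huM T hT le_rfl j
      have hq1 : (u 1 j - M j) * h 2 ≤ (M j - u 1 j) * (Real.log d + Real.log C) := by
        have := mul_le_mul_of_nonpos_left hh2 (by linarith : u 1 j - M j ≤ 0)
        linarith [this]
      have hq2 : (M j - u T j) * h T ≤ 0 :=
        mul_nonpos_of_nonneg_of_nonpos (by linarith) hhT
      have hT2R : (2:ℝ) ≤ T := by exact_mod_cast hT2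
      have hMC : 0 ≤ M j * Real.log C := mul_nonneg (hM0 j) hlogC0
      have huC : 0 ≤ u 1 j * Real.log C :=
        mul_nonneg (hu 1 (mem1T le_rfl hT) j) hlogC0
      rw [e1, e2, e3, e4]
      linarith [e5, hq1, hq2, hMC, huC, hT2R]
  -- sum the middle bounds over t
  have hmidsum : (∑ t ∈ Finset.Icc 2 T, (F t - H t))
      ≤ ((∑ t ∈ Finset.Icc 2 T, ∑ j, u t j)
            - (∑ t ∈ Finset.Icc 2 T, dtv (u t) (u (t-1)))) * Real.log (1/(1-α))
        + (∑ t ∈ Finset.Icc 2 T, dtv (u t) (u (t-1))) * Real.log (Zmax/α)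
        + ∑ t ∈ Finset.Icc 2 T, ∑ j, (u (t-1) j - u t j) * Real.log (w t j) := by
    calc (∑ t ∈ Finset.Icc 2 T, (F t - H t))
        ≤ ∑ t ∈ Finset.Icc 2 T, (((∑ j, u t j) - dtv (u t) (u (t-1))) * Real.log (1/(1-α))
            + dtv (u t) (u (t-1)) * Real.log (Zmax / α)
            + ∑ j, (u (t-1) j - u t j) * Real.log (w t j)) := by
          apply Finset.sum_le_sum
          intro t ht
          obtain ⟨h2t, hTt⟩ := Finset.mem_Icc.mp ht
          exact hmid t h2t hTt
      _ = _ := by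
          rw [Finset.sum_add_distrib, Finset.sum_add_distrib, ← Finset.sum_mul,
            ← Finset.sum_mul, Finset.sum_sub_distrib]
  have hBsum : ∑ t ∈ Finset.Icc 2 T, ∑ j, (u (t-1) j - u t j) * Real.log (w t j)
      ≤ (∑ j, M j) * Real.log d - (∑ j, u 1 j) * Real.log d
        + (∑ j, M j) * T * Real.log C := by
    rw [Finset.sum_comm]
    calc ∑ j, ∑ t ∈ Finset.Icc 2 T, (u (t-1) j - u t j) * Real.log (w t j)
        ≤ ∑ j, ((M j - u 1 j) * Real.log d + M j * T * Real.log C) :=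
          Finset.sum_le_sum (fun j _ => hB j)
      _ = _ := by
          rw [Finset.sum_congr rfl (fun j (_ : j ∈ Finset.univ) =>
            show (M j - u 1 j) * Real.log d + M j * (T : ℝ) * Real.log C
              = M j * Real.log d - u 1 j * Real.log d + M j * ((T : ℝ) * Real.log C)
            from by ring)]
          rw [Finset.sum_add_distrib, Finset.sum_sub_distrib, ← Finset.sum_mul,
            ← Finset.sum_mul, ← Finset.sum_mul]
          ring
  have hStot : ∑ t ∈ Finset.Icc 1 T, ∑ j, u t j * (Real.log (v (t+1) j) - Real.log (p t j))
      ≤ (∑ j, M j) * Real.log d + (∑ j, M j) * T * Real.log C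
        + (∑ t ∈ Finset.Icc 2 T, dtv (u t) (u (t-1))) * Real.log (Zmax/α)
        + ((∑ t ∈ Finset.Icc 2 T, ∑ j, u t j)
            - (∑ t ∈ Finset.Icc 2 T, dtv (u t) (u (t-1)))) * Real.log (1/(1-α)) := by
    rw [split1, hfirst]
    linarith [hmidsum, hBsum, hlast]
  have htot : η * ((∑ t ∈ Finset.Icc 1 T, (∑ i, u t i) * (∑ i, p t i * ℓ t i))
        - ∑ t ∈ Finset.Icc 1 T, ∑ i, u t i * ℓ t i)
      ≤ (∑ t ∈ Finset.Icc 1 T, ∑ j, u t j * (Real.log (v (t+1) j) - Real.log (p t j)))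
        + η^2/8 * ∑ t ∈ Finset.Icc 1 T, ∑ i, u t i := by
    have hsum : ∑ t ∈ Finset.Icc 1 T,
          (η * ((∑ i, u t i) * (∑ i, p t i * ℓ t i) - ∑ i, u t i * ℓ t i))
        ≤ ∑ t ∈ Finset.Icc 1 T,
            ((∑ j, u t j * (Real.log (v (t+1) j) - Real.log (p t j)))
              + η ^ 2 / 8 * ∑ i, u t i) :=
      Finset.sum_le_sum (fun t (ht : t ∈ Finset.Icc 1 T) => by
        obtain ⟨h1t, h2t⟩ := Finset.mem_Icc.mp ht
        exact hstep2 t h1t h2t)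
    calc η * ((∑ t ∈ Finset.Icc 1 T, (∑ i, u t i) * (∑ i, p t i * ℓ t i))
          - ∑ t ∈ Finset.Icc 1 T, ∑ i, u t i * ℓ t i)
        = ∑ t ∈ Finset.Icc 1 T,
            η * ((∑ i, u t i) * (∑ i, p t i * ℓ t i) - ∑ i, u t i * ℓ t i) := by
          rw [← Finset.sum_sub_distrib, ← Finset.mul_sum]
      _ ≤ ∑ t ∈ Finset.Icc 1 T,
            ((∑ j, u t j * (Real.log (v (t+1) j) - Real.log (p t j)))
              + η ^ 2 / 8 * ∑ i, u t i) := hsum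
      _ = _ := by
          rw [Finset.sum_add_distrib, ← Finset.mul_sum]
  -- conclude
  have hKη : (∑ t ∈ Finset.Icc 1 T, (∑ i, u t i) * (∑ i, p t i * ℓ t i))
        - ∑ t ∈ Finset.Icc 1 T, ∑ i, u t i * ℓ t i
      ≤ ((∑ j, M j) * Real.log d + (∑ j, M j) * T * Real.log C
        + (∑ t ∈ Finset.Icc 2 T, dtv (u t) (u (t-1))) * Real.log (Zmax/α)
        + ((∑ t ∈ Finset.Icc 2 T, ∑ j, u t j)
            - (∑ t ∈ Finset.Icc 2 T, dtv (u t) (u (t-1)))) * Real.log (1/(1-α))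
        + η^2/8 * ∑ t ∈ Finset.Icc 1 T, ∑ i, u t i) / η := by
    rw [le_div_iff₀ hη]
    linarith [htot, hStot]
  refine le_trans hKη (le_of_eq ?_)
  have e5 : η ^ 2 / 8 * (∑ t ∈ Finset.Icc 1 T, ∑ i, u t i) / η
      = η / 8 * (∑ t ∈ Finset.Icc 1 T, ∑ i, u t i) := by
    rw [div_eq_iff (ne_of_gt hη)]
    ring
  rw [add_div, add_div, add_div, add_div, e5]
  ring
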